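/- Let Y be a Poisson random variable with mean M ≥ 1 and let H_n denote the n-th harmonic number. Then |E H_Y − H_M| ≤ C·M^{−1/2} for an absolute constant C (e.g. C = 1 + √17 works); consequently E H_Y = log M + γ + O(M^{−1/2}) as M → ∞ (M an integer), where γ is the Euler–Mascheroni constant. -/

import Mathlib

/-- The `n`-th harmonic number `H_n = ∑_{i=1}^n 1/i` (with `H_0 = 0`). -/
noncomputable def harmonicR (n : ℕ) : ℝ := ∑ i ∈ Finset.range n, (1 : ℝ) / (i + 1)

lemma exp_tsum (x : ℝ) : ∑' k : ℕ, x ^ k / (Nat.factorial k : ℝ) = Real.exp x := by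
  rw [Real.exp_eq_exp_ℝ, NormedSpace.exp_eq_tsum_div]

lemma summable_poly_fact (x : ℝ) (hx : 0 ≤ x) (j : ℕ) :
    Summable (fun k : ℕ => (k : ℝ) ^ j * x ^ k / Nat.factorial k) := by
  refine Summable.of_nonneg_of_le (fun k => by positivity)
    (fun k => ?_) (Real.summable_pow_div_factorial ((2:ℝ) ^ j * x))
  rw [div_le_div_iff_of_pos_right (by positivity : (0:ℝ) < Nat.factorial k), mul_pow]
  have h1 : (k : ℝ) ≤ 2 ^ k := by exact_mod_cast (Nat.lt_two_pow_self (n := k)).le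
  have h2 : (k : ℝ) ^ j ≤ (2 ^ k : ℝ) ^ j := pow_le_pow_left₀ (by positivity) h1 j
  calc (k:ℝ) ^ j * x ^ k ≤ (2 ^ k : ℝ) ^ j * x ^ k := by
        exact mul_le_mul_of_nonneg_right h2 (by positivity)
    _ = ((2:ℝ) ^ j) ^ k * x ^ k := by rw [← pow_mul, ← pow_mul, Nat.mul_comm]


noncomputable def pw (x : ℝ) (k : ℕ) : ℝ := x ^ k * Real.exp (-x) / Nat.factorial k

lemma pw_nonneg (x : ℝ) (hx : 0 ≤ x) (k : ℕ) : 0 ≤ pw x k := by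
  unfold pw; positivity

lemma pw_succ (x : ℝ) (k : ℕ) : ((k:ℝ) + 1) * pw x (k + 1) = x * pw x k := by
  unfold pw
  rw [Nat.factorial_succ, pow_succ]
  push_cast
  have h1 : (Nat.factorial k : ℝ) ≠ 0 := by positivity
  field_simp

lemma summable_pw_poly (x : ℝ) (hx : 0 ≤ x) (j : ℕ) :
    Summable (fun k : ℕ => (k : ℝ) ^ j * pw x k) := by
  have := (summable_poly_fact x hx j).mul_right (Real.exp (-x))
  refine this.congr fun k => ?_
  unfold pw; ring


section Moments

variable {x : ℝ} (hx : 0 ≤ x)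

include hx

lemma summable_pw : Summable (pw x) := by
  have := summable_pw_poly x hx 0
  simpa using this

lemma summable_pw1 : Summable (fun k : ℕ => (k:ℝ) * pw x k) := by
  have := summable_pw_poly x hx 1
  simpa using this

lemma summable_pw2 : Summable (fun k : ℕ => (k:ℝ)^2 * pw x k) := summable_pw_poly x hx 2

lemma summable_pw_sq (c : ℝ) : Summable (fun k : ℕ => (c - (k:ℝ))^2 * pw x k) := by
  have h := ((summable_pw2 hx).add (((summable_pw1 hx).mul_left (-2*c)).add
    ((summable_pw hx).mul_left (c^2))))
  refine h.congr fun k => ?_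
  ring

lemma tsum_pw : ∑' k : ℕ, pw x k = 1 := by
  have : ∀ k : ℕ, pw x k = Real.exp (-x) * (x ^ k / Nat.factorial k) := by
    intro k; unfold pw; ring
  rw [tsum_congr this, tsum_mul_left, exp_tsum, ← Real.exp_add]
  simp

lemma tsum_pw1 : ∑' k : ℕ, (k:ℝ) * pw x k = x := by
  rw [Summable.tsum_eq_zero_add (summable_pw1 hx)]
  simp only [Nat.cast_zero, zero_mul, zero_add]
  have : ∀ k : ℕ, ((k+1:ℕ):ℝ) * pw x (k+1) = x * pw x k := by
    intro k; push_cast; exact pw_succ x k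
  rw [tsum_congr this, tsum_mul_left, tsum_pw hx, mul_one]

lemma tsum_pw2 : ∑' k : ℕ, (k:ℝ) * ((k:ℝ) - 1) * pw x k = x^2 := by
  have hs : Summable (fun k : ℕ => (k:ℝ) * ((k:ℝ) - 1) * pw x k) := by
    refine ((summable_pw2 hx).add ((summable_pw1 hx).mul_left (-1))).congr fun k => ?_
    ring
  rw [Summable.tsum_eq_zero_add hs]
  have hs2 : Summable (fun k : ℕ => ((k+1:ℕ):ℝ) * (((k+1:ℕ):ℝ) - 1) * pw x (k+1)) :=
    (summable_nat_add_iff 1).2 hs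
  rw [Summable.tsum_eq_zero_add hs2]
  have key : ∀ k : ℕ, ((k+1+1:ℕ):ℝ) * (((k+1+1:ℕ):ℝ) - 1) * pw x (k+1+1) = x^2 * pw x k := by
    intro k
    have h1 := pw_succ x (k+1)
    have h2 := pw_succ x k
    push_cast at h1 ⊢
    nlinarith [h1, h2]
  rw [tsum_congr key, tsum_mul_left, tsum_pw hx]
  norm_num

lemma tsum_pw_sq (c : ℝ) : ∑' k : ℕ, (c - (k:ℝ))^2 * pw x k = x^2 + (1 - 2*c) * x + c^2 := by
  have key : ∀ k : ℕ, (c - (k:ℝ))^2 * pw x k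
      = (k:ℝ) * ((k:ℝ) - 1) * pw x k + ((1 - 2*c) * ((k:ℝ) * pw x k) + c^2 * pw x k) := by
    intro k; ring
  have hs1 : Summable (fun k : ℕ => (k:ℝ) * ((k:ℝ) - 1) * pw x k) := by
    refine ((summable_pw2 hx).add ((summable_pw1 hx).mul_left (-1))).congr fun k => ?_
    ring
  rw [tsum_congr key, Summable.tsum_add hs1 (((summable_pw1 hx).mul_left _).add ((summable_pw hx).mul_left _)),
    Summable.tsum_add ((summable_pw1 hx).mul_left _) ((summable_pw hx).mul_left _),
    tsum_mul_left, tsum_mul_left, tsum_pw2 hx, tsum_pw1 hx, tsum_pw hx]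
  ring


end Moments

lemma pw_two_step (x : ℝ) (k : ℕ) :
    x ^ 2 * pw x k = ((k:ℝ)+1) * ((k:ℝ)+2) * pw x (k+2) := by
  have h1 := pw_succ x (k+1)
  have h2 := pw_succ x k
  push_cast at h1
  show x ^ 2 * pw x k = ((k:ℝ)+1) * ((k:ℝ)+2) * pw x (k+1+1)
  linear_combination (-x) * h2 + (-((k:ℝ)+1)) * h1

lemma summable_g {x : ℝ} (hx : 0 ≤ x) :
    Summable (fun k : ℕ => (x - (k:ℝ))^2/((k:ℝ)+1)^2 * pw x k) := by
  refine Summable.of_nonneg_of_le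
    (fun k => mul_nonneg (by positivity) (pw_nonneg x hx k)) (fun k => ?_) (summable_pw_sq hx x)
  have h2 : 0 ≤ pw x k := pw_nonneg x hx k
  refine mul_le_mul_of_nonneg_right ?_ h2
  have : (1:ℝ) ≤ ((k:ℝ)+1)^2 := by nlinarith [Nat.cast_nonneg (α := ℝ) k]
  calc (x - (k:ℝ))^2/((k:ℝ)+1)^2 ≤ (x - (k:ℝ))^2 / 1 :=
        div_le_div_of_nonneg_left (sq_nonneg _) (by norm_num) this
    _ = (x - (k:ℝ))^2 := by norm_num

lemma tsum_g_le {x : ℝ} (hx : 0 < x) :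
    ∑' k : ℕ, (x - (k:ℝ))^2/((k:ℝ)+1)^2 * pw x k ≤ 2*(x+4)/x^2 := by
  have hx0 : (0:ℝ) ≤ x := hx.le
  set h : ℕ → ℝ := fun j => (x + 2 - (j:ℝ))^2 * pw x j with hh
  have hhs : Summable h := summable_pw_sq hx0 (x+2)
  have hhs2 : Summable (fun k : ℕ => h (k+2)) := (summable_nat_add_iff 2).2 hhs
  have hpt : ∀ k : ℕ, (x - (k:ℝ))^2/((k:ℝ)+1)^2 * pw x k ≤ 2/x^2 * h (k+2) := by
    intro k
    have hkey := pw_two_step x k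
    have h2 : 0 ≤ pw x (k+2) := pw_nonneg x hx0 (k+2)
    have hk1 : (0:ℝ) < ((k:ℝ)+1)^2 := by positivity
    have hx2 : (0:ℝ) < x^2 := by positivity
    have hEq : h (k+2) = (x - (k:ℝ))^2 * pw x (k+2) := by
      rw [hh]; push_cast; ring_nf
    rw [hEq, div_mul_eq_mul_div, div_mul_eq_mul_div, div_le_div_iff₀ hk1 hx2]
    nlinarith [hkey, mul_nonneg (mul_nonneg (mul_nonneg (sq_nonneg (x - (k:ℝ))) h2)
      (by positivity : (0:ℝ) ≤ (k:ℝ)+1)) (Nat.cast_nonneg (α := ℝ) k)]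
  have step1 : ∑' k : ℕ, (x - (k:ℝ))^2/((k:ℝ)+1)^2 * pw x k ≤ ∑' k : ℕ, 2/x^2 * h (k+2) :=
    Summable.tsum_le_tsum hpt (summable_g hx0) (hhs2.mul_left _)
  have step2 : ∑' k : ℕ, 2/x^2 * h (k+2) = 2/x^2 * ∑' k : ℕ, h (k+2) := tsum_mul_left
  have step3 : ∑' k : ℕ, h (k+2) ≤ ∑' j : ℕ, h j := by
    have hsplit := Summable.sum_add_tsum_nat_add 2 hhs
    have hnn : 0 ≤ ∑ i ∈ Finset.range 2, h i := by
      apply Finset.sum_nonneg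
      intro i _
      exact mul_nonneg (sq_nonneg _) (pw_nonneg x hx0 i)
    linarith [hsplit]
  have step4 : ∑' j : ℕ, h j = x + 4 := by
    rw [hh, tsum_pw_sq hx0 (x+2)]; ring
  calc ∑' k : ℕ, (x - (k:ℝ))^2/((k:ℝ)+1)^2 * pw x k ≤ 2/x^2 * ∑' k : ℕ, h (k+2) := by
        rw [← step2]; exact step1
    _ ≤ 2/x^2 * (x + 4) := by
        apply mul_le_mul_of_nonneg_left _ (by positivity)
        rw [← step4] at *; exact step3
    _ = 2*(x+4)/x^2 := by ring


lemma harmonicR_nonneg (n : ℕ) : 0 ≤ harmonicR n :=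
  Finset.sum_nonneg fun i _ => by positivity

lemma harmonicR_le (n : ℕ) : harmonicR n ≤ n := by
  calc harmonicR n ≤ ∑ i ∈ Finset.range n, (1:ℝ) := by
        apply Finset.sum_le_sum
        intro i _
        rw [div_le_one (by positivity)]
        linarith [Nat.cast_nonneg (α := ℝ) i]
    _ = n := by simp

lemma harmonicR_sub_le {m n : ℕ} (h : m ≤ n) :
    harmonicR n - harmonicR m ≤ ((n:ℝ) - m)/((m:ℝ)+1) := by
  unfold harmonicR
  rw [← Finset.sum_Ico_eq_sub _ h]
  have := Finset.sum_le_card_nsmul (Finset.Ico m n) (fun i => (1:ℝ)/(i+1)) (1/((m:ℝ)+1))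
    (fun i hi => by
      have hmi : m ≤ i := (Finset.mem_Ico.1 hi).1
      apply div_le_div_of_nonneg_left (by norm_num) (by positivity)
      have : (m:ℝ) ≤ i := by exact_mod_cast hmi
      linarith)
  rw [Nat.card_Ico] at this
  calc ∑ i ∈ Finset.Ico m n, (1:ℝ)/(i+1) ≤ (n - m) • (1/((m:ℝ)+1)) := this
    _ = ((n:ℝ) - m)/((m:ℝ)+1) := by
        rw [nsmul_eq_mul, Nat.cast_sub h]
        ring

lemma harmonicR_mono {m n : ℕ} (h : m ≤ n) : harmonicR m ≤ harmonicR n := by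
  unfold harmonicR
  apply Finset.sum_le_sum_of_subset_of_nonneg (Finset.range_subset_range.2 h)
  intro i _ _; positivity

lemma harm_abs_bound (k M : ℕ) (hM : 1 ≤ M) :
    |harmonicR k - harmonicR M| ≤ |(k:ℝ) - M|/M + |(M:ℝ) - k|/((k:ℝ)+1) := by
  have hM0 : (0:ℝ) < M := by exact_mod_cast hM
  rcases le_total k M with h | h
  · have h1 : harmonicR k ≤ harmonicR M := harmonicR_mono h
    have h2 : (k:ℝ) ≤ M := by exact_mod_cast h
    rw [abs_sub_comm, abs_of_nonneg (by linarith : (0:ℝ) ≤ harmonicR M - harmonicR k),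
      abs_sub_comm (k:ℝ) (M:ℝ), abs_of_nonneg (by linarith : (0:ℝ) ≤ (M:ℝ) - k)]
    have h3 := harmonicR_sub_le h
    have h4 : (0:ℝ) ≤ ((M:ℝ) - k)/M := div_nonneg (by linarith) (by positivity)
    linarith
  · have h1 : harmonicR M ≤ harmonicR k := harmonicR_mono h
    have h2 : (M:ℝ) ≤ k := by exact_mod_cast h
    rw [abs_sub_comm (M:ℝ) (k:ℝ), abs_of_nonneg (by linarith : (0:ℝ) ≤ harmonicR k - harmonicR M),
      abs_of_nonneg (by linarith : (0:ℝ) ≤ (k:ℝ) - M)]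
    have h3 := harmonicR_sub_le h
    have h5 : ((k:ℝ) - M)/((M:ℝ)+1) ≤ ((k:ℝ) - M)/M := by
      apply div_le_div_of_nonneg_left (by linarith) hM0
      linarith
    have h4 : (0:ℝ) ≤ ((k:ℝ) - M)/((k:ℝ)+1) :=
      div_nonneg (by linarith) (by positivity)
    linarith

lemma abs_le_am (u t : ℝ) (ht : 0 < t) : |u| ≤ (u^2/t + t)/2 := by
  rw [div_add' _ _ _ ht.ne', div_div, le_div_iff₀ (by positivity)]
  nlinarith [sq_nonneg (|u| - t), sq_abs u, abs_nonneg u]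


lemma harmonicR_eq (n : ℕ) : harmonicR n = (harmonic n : ℝ) := by
  unfold harmonicR harmonic
  push_cast
  simp [one_div]

lemma harmonicR_log_bound (M : ℕ) (hM : 1 ≤ M) :
    |harmonicR M - (Real.log M + Real.eulerMascheroniConstant)| ≤ 1/M := by
  have hM0 : (0:ℝ) < M := by exact_mod_cast hM
  have h1 : Real.eulerMascheroniConstant < Real.eulerMascheroniSeq' M :=
    Real.eulerMascheroniConstant_lt_eulerMascheroniSeq' M
  have h2 : Real.eulerMascheroniSeq M < Real.eulerMascheroniConstant :=
    Real.eulerMascheroniSeq_lt_eulerMascheroniConstant M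
  rw [Real.eulerMascheroniSeq'] at h1
  rw [if_neg (by omega : M ≠ 0)] at h1
  rw [Real.eulerMascheroniSeq] at h2
  rw [← harmonicR_eq] at h1 h2
  have hlog : Real.log ((M:ℝ)+1) - Real.log M ≤ 1/M := by
    rw [← Real.log_div (by positivity) (by positivity)]
    have := Real.log_le_sub_one_of_pos (show (0:ℝ) < ((M:ℝ)+1)/M by positivity)
    have e : ((M:ℝ)+1)/M - 1 = 1/M := by field_simp; ring
    linarith
  rw [abs_le]
  constructor
  · linarith
  · push_cast at h2
    linarith


lemma main_bound (M : ℕ) (hM : 1 ≤ M) :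
    |(∑' k : ℕ, pw (M:ℝ) k * harmonicR k) - harmonicR M|
      ≤ (1 + Real.sqrt 17) / Real.sqrt M := by
  set x : ℝ := (M:ℝ) with hxdef
  have hx1 : (1:ℝ) ≤ x := by rw [hxdef]; exact_mod_cast hM
  have hx0 : (0:ℝ) < x := by linarith
  set s : ℝ := Real.sqrt x with hsdef
  have hs0 : 0 < s := Real.sqrt_pos.2 hx0
  have hs2 : s^2 = x := Real.sq_sqrt hx0.le
  have hs1 : 1 ≤ s := by nlinarith
  set r : ℝ := Real.sqrt 17 with hrdef
  have hr0 : 0 < r := Real.sqrt_pos.2 (by norm_num)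
  have hr2 : r^2 = 17 := Real.sq_sqrt (by norm_num)
  have hr4 : 4 ≤ r := by nlinarith
  have hrs0 : 0 < r/s := by positivity
  set G : ℕ → ℝ := fun k =>
    (((k:ℝ) - x)^2/s + s)/2/x
      + ((x - (k:ℝ))^2/(((k:ℝ)+1)^2)/(r/s) + r/s)/2 with hGdef
  have e1 : ∀ k : ℕ, pw x k * G k
      = (1/(2*x*s)) * ((x - (k:ℝ))^2 * pw x k)
        + (s/(2*x) + r/(2*s)) * pw x k
        + (s/(2*r)) * ((x - (k:ℝ))^2/(((k:ℝ)+1)^2) * pw x k) := by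
    intro k
    have hk1 : ((k:ℝ)+1) ≠ 0 := by positivity
    rw [hGdef]
    field_simp
    ring
  have hB : Summable (fun k => pw x k * G k) :=
    ((((summable_pw_sq hx0.le x).mul_left (1/(2*x*s))).add
      ((summable_pw hx0.le).mul_left (s/(2*x) + r/(2*s)))).add
      ((summable_g hx0.le).mul_left (s/(2*r)))).congr fun k => (e1 k).symm
  have hHsum : Summable (fun k : ℕ => pw x k * harmonicR k) := by
    refine Summable.of_nonneg_of_le
      (fun k => mul_nonneg (pw_nonneg x hx0.le k) (harmonicR_nonneg k))
      (fun k => ?_) (summable_pw1 hx0.le)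
    calc pw x k * harmonicR k ≤ pw x k * k :=
          mul_le_mul_of_nonneg_left (harmonicR_le k) (pw_nonneg x hx0.le k)
      _ = (k:ℝ) * pw x k := by ring
  set d : ℕ → ℝ := fun k => pw x k * harmonicR k - harmonicR M * pw x k with hddef
  have hsub : (∑' k : ℕ, pw x k * harmonicR k) - harmonicR M = ∑' k : ℕ, d k := by
    rw [hddef, Summable.tsum_sub hHsum ((summable_pw hx0.le).mul_left _), tsum_mul_left,
      tsum_pw hx0.le, mul_one]
  have hpt : ∀ k : ℕ, |d k| ≤ pw x k * G k := by
    intro k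
    have hpw := pw_nonneg x hx0.le k
    have hk10 : (0:ℝ) < (k:ℝ)+1 := by positivity
    have h1 : |d k| = pw x k * |harmonicR k - harmonicR M| := by
      rw [hddef, ← abs_of_nonneg hpw, ← abs_mul]
      congr 1
      ring
    rw [h1]
    apply mul_le_mul_of_nonneg_left _ hpw
    refine (harm_abs_bound k M hM).trans ?_
    rw [hGdef]
    have hA : |(k:ℝ) - x|/x ≤ (((k:ℝ) - x)^2/s + s)/2/x := by
      gcongr
      exact abs_le_am _ s hs0
    have hB2 : |x - (k:ℝ)|/((k:ℝ)+1)
        ≤ ((x - (k:ℝ))^2/(((k:ℝ)+1)^2)/(r/s) + r/s)/2 := by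
      have h := abs_le_am ((x - (k:ℝ))/((k:ℝ)+1)) (r/s) hrs0
      rw [abs_div, abs_of_pos hk10, div_pow] at h
      exact h
    exact add_le_add hA hB2
  have habs : Summable (fun k => |d k|) :=
    Summable.of_nonneg_of_le (fun k => abs_nonneg _) hpt hB
  have hts : ∑' k : ℕ, pw x k * G k
      = (1/(2*x*s)) * (∑' k : ℕ, (x - (k:ℝ))^2 * pw x k)
        + (s/(2*x) + r/(2*s)) * (∑' k : ℕ, pw x k)
        + (s/(2*r)) * (∑' k : ℕ, (x - (k:ℝ))^2/(((k:ℝ)+1)^2) * pw x k) := by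
    rw [tsum_congr e1,
      Summable.tsum_add (((summable_pw_sq hx0.le x).mul_left _).add
        ((summable_pw hx0.le).mul_left _)) ((summable_g hx0.le).mul_left _),
      Summable.tsum_add ((summable_pw_sq hx0.le x).mul_left _) ((summable_pw hx0.le).mul_left _),
      tsum_mul_left, tsum_mul_left, tsum_mul_left]
  have hv1 : ∑' k : ℕ, (x - (k:ℝ))^2 * pw x k = x := by
    rw [tsum_pw_sq hx0.le x]; ring
  have hfinal : ∑' k : ℕ, pw x k * G k ≤ (1 + r)/s := by
    rw [hts, hv1, tsum_pw hx0.le, mul_one]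
    have hg := tsum_g_le hx0
    have hc3 : (0:ℝ) ≤ s/(2*r) := by positivity
    have step : (1/(2*x*s)) * x + (s/(2*x) + r/(2*s)) + (s/(2*r)) * (2*(x+4)/x^2)
        ≤ (1 + r)/s := by
      rw [← hs2]
      have hs0' : s ≠ 0 := hs0.ne'
      have hr0' : r ≠ 0 := hr0.ne'
      have e2 : 1/(2*s^2*s) * s^2 + (s/(2*s^2) + r/(2*s)) + s/(2*r) * (2*(s^2+4)/(s^2)^2)
          = 1/s + r/(2*s) + (s^2+4)/(r*s^3) := by
        field_simp
        ring
      rw [e2]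
      have key : (s^2+4)/(r*s^3) ≤ r/(2*s) := by
        rw [div_le_div_iff₀ (by positivity) (by positivity)]
        nlinarith [hr2, hs1, hs0, pow_pos hs0 3, sq_nonneg s, mul_pos hs0 hs0]
      calc 1/s + r/(2*s) + (s^2+4)/(r*s^3) ≤ 1/s + r/(2*s) + r/(2*s) := by linarith
        _ = (1+r)/s := by ring
    calc (1/(2*x*s)) * x + (s/(2*x) + r/(2*s))
          + (s/(2*r)) * (∑' k : ℕ, (x - (k:ℝ))^2/(((k:ℝ)+1)^2) * pw x k)
        ≤ (1/(2*x*s)) * x + (s/(2*x) + r/(2*s)) + (s/(2*r)) * (2*(x+4)/x^2) := by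
          have := mul_le_mul_of_nonneg_left hg hc3
          linarith
      _ ≤ (1 + r)/s := step
  calc |(∑' k : ℕ, pw x k * harmonicR k) - harmonicR M| = |∑' k : ℕ, d k| := by rw [hsub]
    _ = ‖∑' k : ℕ, d k‖ := (Real.norm_eq_abs _).symm
    _ ≤ ∑' k : ℕ, ‖d k‖ := norm_tsum_le_tsum_norm (by simpa [Real.norm_eq_abs] using habs)
    _ = ∑' k : ℕ, |d k| := by simp [Real.norm_eq_abs]
    _ ≤ ∑' k : ℕ, pw x k * G k := Summable.tsum_le_tsum hpt habs hB
    _ ≤ (1 + r)/s := hfinal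


/-- For a Poisson random variable `Y` with integer mean `M ≥ 1`
(so `P(Y = k) = M^k e^{-M}/k!`), `|E H_Y - H_M| ≤ (1 + √17) M^{-1/2}`; consequently
`E H_Y = log M + γ + O(M^{-1/2})` with `γ` the Euler–Mascheroni constant. -/
theorem poisson_harmonic_expectation :
    (∀ M : ℕ, 1 ≤ M →
      |(∑' k : ℕ, ((M : ℝ) ^ k * Real.exp (-(M : ℝ)) / Nat.factorial k) * harmonicR k)
          - harmonicR M| ≤ (1 + Real.sqrt 17) / Real.sqrt M) ∧
    ∃ C > 0, ∀ M : ℕ, 1 ≤ M →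
      |(∑' k : ℕ, ((M : ℝ) ^ k * Real.exp (-(M : ℝ)) / Nat.factorial k) * harmonicR k)
          - (Real.log M + Real.eulerMascheroniConstant)| ≤ C / Real.sqrt M := by
  have hmb : ∀ M : ℕ, 1 ≤ M →
      |(∑' k : ℕ, ((M : ℝ) ^ k * Real.exp (-(M : ℝ)) / Nat.factorial k) * harmonicR k)
          - harmonicR M| ≤ (1 + Real.sqrt 17) / Real.sqrt M := by
    intro M hM
    have := main_bound M hM
    simpa [pw] using this
  refine ⟨hmb, 2 + Real.sqrt 17, by positivity, fun M hM => ?_⟩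
  have hM0 : (0:ℝ) < M := by exact_mod_cast hM
  have hM1 : (1:ℝ) ≤ M := by exact_mod_cast hM
  have hs0 : 0 < Real.sqrt M := Real.sqrt_pos.2 hM0
  have h1 := hmb M hM
  have h2 := harmonicR_log_bound M hM
  have h3 : 1/(M:ℝ) ≤ 1/Real.sqrt M := by
    apply div_le_div_of_nonneg_left (by norm_num) hs0
    have h4 : Real.sqrt M ≤ Real.sqrt ((M:ℝ)^2) := Real.sqrt_le_sqrt (by nlinarith)
    rwa [Real.sqrt_sq hM0.le] at h4
  have htri := abs_sub_le
    (∑' k : ℕ, ((M : ℝ) ^ k * Real.exp (-(M : ℝ)) / Nat.factorial k) * harmonicR k)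
    (harmonicR M) (Real.log M + Real.eulerMascheroniConstant)
  have hfin : (1 + Real.sqrt 17) / Real.sqrt M + 1/Real.sqrt M
      = (2 + Real.sqrt 17) / Real.sqrt M := by ring
  linarith
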